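/- If G is a simple graph on n vertices with |E(G)| > n²/4, then G contains a triangle (three mutually adjacent vertices). -/

import Mathlib

open Finset

theorem mantel {V : Type*} [Fintype V] (G : SimpleGraph V)
    (h : (G.edgeSet.ncard : ℝ) > (Fintype.card V : ℝ) ^ 2 / 4) :
    ∃ a b c : V, G.Adj a b ∧ G.Adj b c ∧ G.Adj a c := by
  classical
  by_contra hc
  push_neg at hc
  set n := Fintype.card V with hn
  set m := #G.edgeFinset with hmdef
  have hms : G.edgeSet.ncard = m := by
    rw [hmdef, SimpleGraph.edgeFinset, Set.ncard_eq_toFinset_card']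
  rw [hms] at h
  -- triangle-free: neighborhoods of adjacent vertices are disjoint
  have hdeg : ∀ x y : V, G.Adj x y → G.degree x + G.degree y ≤ n := by
    intro x y hxy
    have hdisj : Disjoint (G.neighborFinset x) (G.neighborFinset y) := by
      rw [Finset.disjoint_left]
      intro z hzx hzy
      rw [SimpleGraph.mem_neighborFinset] at hzx hzy
      exact hc x z y hzx hzy.symm hxy
    calc G.degree x + G.degree y
        = #(G.neighborFinset x ∪ G.neighborFinset y) := by
          rw [Finset.card_union_of_disjoint hdisj,
            SimpleGraph.card_neighborFinset_eq_degree,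
            SimpleGraph.card_neighborFinset_eq_degree]
      _ ≤ #(Finset.univ : Finset V) := Finset.card_le_card (Finset.subset_univ _)
      _ = n := Finset.card_univ
  set P : Finset (V × V) := Finset.univ.filter (fun p ↦ G.Adj p.1 p.2) with hP
  have hPcard : #P = 2 * m := (G.two_mul_card_edgeFinset).symm
  have hfilter : ∀ x : V, Finset.univ.filter (fun y ↦ G.Adj x y) = G.neighborFinset x := by
    intro x; ext y; simp [SimpleGraph.mem_neighborFinset]
  have h1 : ∑ p ∈ P, G.degree p.1 = ∑ v, G.degree v ^ 2 := by
    rw [hP, Finset.sum_filter, Fintype.sum_prod_type]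
    refine Finset.sum_congr rfl fun x _ ↦ ?_
    rw [← Finset.sum_filter, hfilter]
    calc _ = #(G.neighborFinset x) * G.degree x := Finset.sum_const_nat (fun _ _ => rfl)
      _ = _ := by rw [sq]; congr 1
  have h2 : ∑ p ∈ P, G.degree p.2 = ∑ v, G.degree v ^ 2 := by
    rw [hP, Finset.sum_filter, Fintype.sum_prod_type_right]
    refine Finset.sum_congr rfl fun y _ ↦ ?_
    have : ∀ x : V, G.Adj x y ↔ G.Adj y x := fun x ↦ ⟨SimpleGraph.Adj.symm, SimpleGraph.Adj.symm⟩
    simp_rw [this]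
    rw [← Finset.sum_filter, hfilter]
    calc _ = #(G.neighborFinset y) * G.degree y := Finset.sum_const_nat (fun _ _ => rfl)
      _ = _ := by rw [sq]; congr 1
  have hsum : ∑ p ∈ P, (G.degree p.1 + G.degree p.2) ≤ n * (2 * m) := by
    calc ∑ p ∈ P, (G.degree p.1 + G.degree p.2) ≤ ∑ _p ∈ P, n :=
        Finset.sum_le_sum (fun p hp ↦ by
          rw [hP, Finset.mem_filter] at hp
          exact hdeg p.1 p.2 hp.2)
      _ = #P * n := by rw [Finset.sum_const, smul_eq_mul]
      _ = n * (2 * m) := by rw [hPcard, mul_comm]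
  rw [Finset.sum_add_distrib, h1, h2] at hsum
  have hS : ∑ v, G.degree v ^ 2 ≤ n * m := by linarith
  have hdegsum : ∑ v, G.degree v = 2 * m := G.sum_degrees_eq_twice_card_edges
  -- Cauchy-Schwarz in ℝ
  have hCS : ((2 * m : ℕ) : ℝ) ^ 2 ≤ (n : ℝ) * ∑ v, (G.degree v : ℝ) ^ 2 := by
    have := sq_sum_le_card_mul_sum_sq (s := (Finset.univ : Finset V))
      (f := fun v ↦ (G.degree v : ℝ))
    rw [Finset.card_univ] at this
    calc ((2 * m : ℕ) : ℝ) ^ 2 = (∑ v, (G.degree v : ℝ)) ^ 2 := by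
          rw [← hdegsum]; push_cast; ring
      _ ≤ (n : ℝ) * ∑ v, (G.degree v : ℝ) ^ 2 := this
  have hSR : ∑ v, (G.degree v : ℝ) ^ 2 ≤ (n : ℝ) * m := by
    calc ∑ v, (G.degree v : ℝ) ^ 2 = ((∑ v, G.degree v ^ 2 : ℕ) : ℝ) := by push_cast; ring
      _ ≤ ((n * m : ℕ) : ℝ) := by exact_mod_cast Nat.cast_le.mpr hS
      _ = (n : ℝ) * m := by push_cast; ring
  have hm0 : (0 : ℝ) ≤ (m : ℝ) := Nat.cast_nonneg m
  have hn0 : (0 : ℝ) ≤ (n : ℝ) := Nat.cast_nonneg n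
  push_cast at hCS
  nlinarith [h, hCS, hSR, hm0, hn0, sq_nonneg ((n : ℝ))]
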